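/- arXiv:2109.06141 — 5 statements merged into one kernel-verified Lean document; each statement's English description precedes it below -/
import Mathlib

section
/- If each loss function f_i : ℝ^d → ℝ is L-Lipschitz, then for any t ≠ 0 the tilted empirical risk θ ↦ (1/t)·log((1/N)·∑_{i∈[N]} exp(t·f_i(θ))) is L-Lipschitz. -/
theorem tilted_risk_lipschitz (N d : ℕ) (hN : 0 < N) (t : ℝ) (ht : t ≠ 0) (L : NNReal)
    (f : Fin N → EuclideanSpace ℝ (Fin d) → ℝ)
    (hf : ∀ i, LipschitzWith L (f i)) :
    LipschitzWith L
      (fun θ => (1 / t) * Real.log ((1 / (N : ℝ)) * ∑ i, Real.exp (t * f i θ))) := by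
  have hNe : Nonempty (Fin N) := Fin.pos_iff_nonempty.mp hN
  set S : EuclideanSpace ℝ (Fin d) → ℝ := fun θ => ∑ i, Real.exp (t * f i θ) with hS
  have hSpos : ∀ θ, 0 < S θ := fun θ =>
    Finset.sum_pos (fun i _ => Real.exp_pos _) Finset.univ_nonempty
  have key : ∀ x y : EuclideanSpace ℝ (Fin d),
      Real.log (S x) - Real.log (S y) ≤ |t| * ((L : ℝ) * dist x y) := by
    intro x y
    have hle : S x ≤ Real.exp (|t| * ((L : ℝ) * dist x y)) * S y := by
      rw [hS]
      simp only
      rw [Finset.mul_sum]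
      apply Finset.sum_le_sum
      intro i _
      rw [← Real.exp_add]
      apply Real.exp_le_exp.mpr
      have h1 : t * f i x - t * f i y ≤ |t| * ((L : ℝ) * dist x y) := by
        calc t * f i x - t * f i y = t * (f i x - f i y) := by ring
          _ ≤ |t * (f i x - f i y)| := le_abs_self _
          _ = |t| * |f i x - f i y| := abs_mul _ _
          _ ≤ |t| * ((L : ℝ) * dist x y) := by
              apply mul_le_mul_of_nonneg_left _ (abs_nonneg t)
              have := (hf i).dist_le_mul x y
              rwa [Real.dist_eq] at this
      linarith
    have h2 : Real.log (S x) ≤ |t| * ((L : ℝ) * dist x y) + Real.log (S y) := by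
      calc Real.log (S x) ≤ Real.log (Real.exp (|t| * ((L : ℝ) * dist x y)) * S y) :=
            Real.log_le_log (hSpos x) hle
        _ = |t| * ((L : ℝ) * dist x y) + Real.log (S y) := by
            rw [Real.log_mul (Real.exp_ne_zero _) (hSpos y).ne', Real.log_exp]
    linarith
  apply LipschitzWith.of_dist_le_mul
  intro x y
  have hexp : ∀ θ, (1/t) * Real.log ((1/(N:ℝ)) * S θ)
      = (1/t) * Real.log (1/(N:ℝ)) + (1/t) * Real.log (S θ) := by
    intro θ
    rw [Real.log_mul (by positivity) (hSpos θ).ne']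
    ring
  simp only [Real.dist_eq]
  rw [hexp, hexp]
  have habs : |Real.log (S x) - Real.log (S y)| ≤ |t| * ((L : ℝ) * dist x y) := by
    rw [abs_sub_le_iff]
    constructor
    · exact key x y
    · have := key y x
      rwa [dist_comm] at this
  have ht' : (0:ℝ) < |t| := abs_pos.mpr ht
  calc |((1/t) * Real.log (1/(N:ℝ)) + (1/t) * Real.log (S x)) -
        ((1/t) * Real.log (1/(N:ℝ)) + (1/t) * Real.log (S y))|
      = |1/t| * |Real.log (S x) - Real.log (S y)| := by
        rw [← abs_mul]; ring_nf
    _ ≤ |1/t| * (|t| * ((L : ℝ) * dist x y)) := by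
        apply mul_le_mul_of_nonneg_left habs (abs_nonneg _)
    _ = (L : ℝ) * dist x y := by
        rw [abs_div, abs_one]
        field_simp
end

section
/- The tilted empirical risk equals the average loss plus (1/t) times the KL divergence between the uniform weight vector and the tilted weight vector: R̃(t;θ) = (1/N)·∑_i f_i(θ) + (1/t)·∑_{i∈[N]} (1/N)·log((1/N)/w_i(t;θ)), where w_i(t;θ) = exp(t·f_i(θ)) / ∑_{j} exp(t·f_j(θ)). -/
theorem tilted_risk_eq_mean_add_KL (N : ℕ) (hN : 0 < N) (t : ℝ) (ht : t ≠ 0)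
    (f : Fin N → ℝ) :
    (1 / t) * Real.log ((1 / (N : ℝ)) * ∑ i, Real.exp (t * f i))
      = (1 / (N : ℝ)) * ∑ i, f i
        + (1 / t) * ∑ i, (1 / (N : ℝ)) *
            Real.log ((1 / (N : ℝ)) / (Real.exp (t * f i) / ∑ j, Real.exp (t * f j))) := by
  have hNpos : (0:ℝ) < N := Nat.cast_pos.mpr hN
  have hS : (0:ℝ) < ∑ j, Real.exp (t * f j) := by
    apply Finset.sum_pos (fun j _ => Real.exp_pos _)
    exact Finset.univ_nonempty_iff.mpr ⟨⟨0, hN⟩⟩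
  set S := ∑ j, Real.exp (t * f j) with hSdef
  have hlog : ∀ i : Fin N,
      Real.log ((1 / (N : ℝ)) / (Real.exp (t * f i) / S))
        = Real.log (1 / (N : ℝ)) + Real.log S - t * f i := by
    intro i
    rw [Real.log_div (by positivity) (by positivity),
        Real.log_div (Real.exp_ne_zero _) hS.ne', Real.log_exp]
    ring
  have hsum : ∑ i, (1 / (N : ℝ)) *
      Real.log ((1 / (N : ℝ)) / (Real.exp (t * f i) / S))
      = Real.log (1 / (N : ℝ)) + Real.log S - t * ((1 / (N : ℝ)) * ∑ i, f i) := by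
    simp only [hlog]
    rw [← Finset.mul_sum]
    rw [Finset.sum_sub_distrib, Finset.sum_add_distrib, Finset.sum_const,
        Finset.card_univ, Fintype.card_fin, ← Finset.mul_sum]
    field_simp
    rw [Finset.sum_const, Finset.card_univ, Fintype.card_fin, nsmul_eq_mul]
    ring
  rw [hsum, Real.log_mul (by positivity) hS.ne']
  field_simp
  ring
end

section
/- The entropic risk identity: for a random variable X with finite support, distribution p, and a positive density model p_θ, (1/t)·log ∑_x p(x)·p_θ(x)^{−t} = ∑_x p(x)·log(1/p_θ(x)) + (1/t)·∑_x p(x)·log( p(x) / T(x) ), where T(x) := p(x)·p_θ(x)^{−t} / ∑_u p(u)·p_θ(u)^{−t} is the mismatched tilted distribution. -/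
theorem entropic_risk_identity (X : Type*) [Fintype X] (p ptheta : X → ℝ) (t : ℝ)
    (ht : t ≠ 0) (hp : ∀ x, 0 < p x) (hps : ∑ x, p x = 1) (hptheta : ∀ x, 0 < ptheta x) :
    (1 / t) * Real.log (∑ x, p x * ptheta x ^ (-t))
      = (∑ x, p x * Real.log (1 / ptheta x))
        + (1 / t) * ∑ x, p x *
            Real.log (p x / (p x * ptheta x ^ (-t) / ∑ u, p u * ptheta u ^ (-t))) := by
  have hne : (Finset.univ : Finset X).Nonempty := by
    by_contra h
    rw [Finset.not_nonempty_iff_eq_empty] at h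
    rw [h, Finset.sum_empty] at hps
    norm_num at hps
  have ha : ∀ x, 0 < ptheta x ^ (-t) := fun x => Real.rpow_pos_of_pos (hptheta x) _
  set Z : ℝ := ∑ u, p u * ptheta u ^ (-t) with hZdef
  have hZ : 0 < Z := Finset.sum_pos (fun x _ => mul_pos (hp x) (ha x)) hne
  have hterm : ∀ x, Real.log (p x / (p x * ptheta x ^ (-t) / Z))
      = Real.log Z + t * Real.log (ptheta x) := by
    intro x
    rw [Real.log_div (hp x).ne' (div_pos (mul_pos (hp x) (ha x)) hZ).ne',
      Real.log_div (mul_pos (hp x) (ha x)).ne' hZ.ne',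
      Real.log_mul (hp x).ne' (ha x).ne', Real.log_rpow (hptheta x)]
    ring
  have hsum : (∑ x, p x * Real.log (p x / (p x * ptheta x ^ (-t) / Z)))
      = Real.log Z + t * ∑ x, p x * Real.log (ptheta x) := by
    simp_rw [hterm, mul_add, Finset.sum_add_distrib, ← Finset.sum_mul, hps]
    rw [one_mul, Finset.mul_sum]
    congr 1
    exact Finset.sum_congr rfl fun x _ => by ring
  rw [hsum]
  have h1 : ∀ x, p x * Real.log (1 / ptheta x) = -(p x * Real.log (ptheta x)) := by
    intro x
    rw [Real.log_div one_ne_zero (hptheta x).ne', Real.log_one]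
    ring
  simp_rw [h1, Finset.sum_neg_distrib]
  field_simp
  ring
end

section
/- Quantile bound via tilting: let f_1,...,f_N ∈ ℝ, let m := min_i f_i, and let Q̃(γ) := (1/N)·#{i : f_i ≥ γ} be the empirical tail fraction. Then for all t > 0 and all γ > m, Q̃(γ) ≤ ( (1/N)·∑_i exp(t·(f_i − m)) − 1 ) / ( exp(t·(γ − m)) − 1 ). -/
theorem quantile_bound_via_tilting (N : ℕ) (f : Fin N → ℝ)
    (hne : (Finset.univ : Finset (Fin N)).Nonempty) (t γ : ℝ) (ht : 0 < t)
    (hγ : Finset.univ.inf' hne f < γ) :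
    ((Finset.univ.filter (fun i => γ ≤ f i)).card : ℝ) / N
      ≤ ((1 / (N : ℝ)) * (∑ i, Real.exp (t * (f i - Finset.univ.inf' hne f))) - 1)
        / (Real.exp (t * (γ - Finset.univ.inf' hne f)) - 1) := by
  set m := Finset.univ.inf' hne f with hm
  have hN : 0 < (N : ℝ) := by
    have := Finset.univ_nonempty_iff.mp hne
    exact_mod_cast Nat.pos_of_ne_zero (fun h => by subst h; exact (Fin.elim0 this.some))
  have hD : 0 < Real.exp (t * (γ - m)) - 1 := by
    have : 0 < t * (γ - m) := mul_pos ht (by linarith)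
    nlinarith [Real.add_one_lt_exp (x := t * (γ - m)) (by positivity)]
  -- key sum inequality
  have key : ((Finset.univ.filter (fun i => γ ≤ f i)).card : ℝ)
      * (Real.exp (t * (γ - m)) - 1)
      ≤ (∑ i, Real.exp (t * (f i - m))) - N := by
    have h1 : ((Finset.univ.filter (fun i => γ ≤ f i)).card : ℝ)
        * (Real.exp (t * (γ - m)) - 1)
        = ∑ i ∈ Finset.univ.filter (fun i => γ ≤ f i),
            (Real.exp (t * (γ - m)) - 1) := by
      rw [Finset.sum_const, nsmul_eq_mul]
    have h2 : (∑ i, Real.exp (t * (f i - m))) - N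
        = ∑ i : Fin N, (Real.exp (t * (f i - m)) - 1) := by
      rw [Finset.sum_sub_distrib, Finset.sum_const, Finset.card_univ,
        Fintype.card_fin, nsmul_eq_mul, mul_one]
    rw [h1, h2]
    have step1 : ∑ i ∈ Finset.univ.filter (fun i => γ ≤ f i),
        (Real.exp (t * (γ - m)) - 1)
        ≤ ∑ i ∈ Finset.univ.filter (fun i => γ ≤ f i),
        (Real.exp (t * (f i - m)) - 1) := by
      refine Finset.sum_le_sum fun i hi => ?_
      have hfi : γ ≤ f i := (Finset.mem_filter.mp hi).2
      have : t * (γ - m) ≤ t * (f i - m) := by nlinarith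
      have := Real.exp_le_exp.mpr this
      linarith
    refine step1.trans (Finset.sum_le_sum_of_subset_of_nonneg
      (Finset.filter_subset _ _) ?_)
    intro i _ _
    have hmf : m ≤ f i := Finset.inf'_le f (Finset.mem_univ i)
    have : (0:ℝ) ≤ t * (f i - m) := mul_nonneg ht.le (by linarith)
    nlinarith [Real.one_le_exp this]
  rw [div_le_div_iff₀ hN hD] at *
  have : (1 / (N : ℝ)) * (∑ i, Real.exp (t * (f i - m))) - 1
      = ((∑ i, Real.exp (t * (f i - m))) - N) / N := by
    field_simp
  rw [this, div_mul_eq_mul_div, le_div_iff₀ hN]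
  nlinarith [key]
end

section
/- Smoothness bound for negative tilt: suppose each f_i : ℝ^d → ℝ is twice continuously differentiable with Hessian satisfying 0 ≼ ∇²f_i(θ) ≼ β_max·I for all θ. Then for every t < 0, the Hessian of the tilted risk R̃(t;θ) = (1/t)·log((1/N)·∑_i exp(t·f_i(θ))) satisfies ∇²R̃(t;θ) ≼ β_max·I. -/
open Finset

lemma line_deriv2 {E : Type*} [NormedAddCommGroup E] [NormedSpace ℝ E]
    (h : E → ℝ) (hh : ContDiff ℝ 2 h) (θ v : E) (s : ℝ) :
    deriv (deriv (fun s : ℝ => h (θ + s • v))) s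
      = iteratedFDeriv ℝ 2 h (θ + s • v) ![v, v] := by
  have hline : ∀ r : ℝ, HasDerivAt (fun s : ℝ => θ + s • v) v r := by
    intro r
    simpa using ((hasDerivAt_id r).smul_const v).const_add θ
  have hd1 : deriv (fun s : ℝ => h (θ + s • v)) = fun r => fderiv ℝ h (θ + r • v) v := by
    funext r
    exact (((hh.differentiable (by norm_num) (θ + r • v)).hasFDerivAt).comp_hasDerivAt r
      (hline r)).deriv
  have hF : ContDiff ℝ 1 (fderiv ℝ h) := hh.fderiv_right (by norm_num)
  have h2 : HasDerivAt (fun r : ℝ => fderiv ℝ h (θ + r • v) v)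
      (fderiv ℝ (fderiv ℝ h) (θ + s • v) v v) s := by
    have hc : HasDerivAt (fun r : ℝ => fderiv ℝ h (θ + r • v))
        (fderiv ℝ (fderiv ℝ h) (θ + s • v) v) s :=
      ((hF.differentiable (by norm_num) (θ + s • v)).hasFDerivAt).comp_hasDerivAt s (hline s)
    simpa using hc.clm_apply (hasDerivAt_const s v)
  rw [hd1, h2.deriv, iteratedFDeriv_two_apply]
  simp

lemma core_1d (N : ℕ) (hN : 0 < N) (t C : ℝ) (ht : t < 0) (u : Fin N → ℝ → ℝ)
    (hu : ∀ i, ContDiff ℝ 2 (u i))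
    (hC : ∀ i, deriv (deriv (u i)) 0 ≤ C) :
    deriv (deriv (fun s : ℝ =>
      (1 / t) * Real.log ((1 / (N : ℝ)) * ∑ i, Real.exp (t * u i s)))) 0 ≤ C := by
  haveI : Nonempty (Fin N) := ⟨⟨0, hN⟩⟩
  have htne : t ≠ 0 := ne_of_lt ht
  have hNne : (N : ℝ) ≠ 0 := Nat.cast_ne_zero.mpr hN.ne'
  set e : Fin N → ℝ → ℝ := fun i s => Real.exp (t * u i s) with he
  have hepos : ∀ i s, 0 < e i s := fun i s => Real.exp_pos _
  have hEpos : ∀ s, 0 < ∑ i, e i s := fun s =>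
    Finset.sum_pos (fun i _ => hepos i s) Finset.univ_nonempty
  have hu' : ∀ i, Differentiable ℝ (u i) := fun i => (hu i).differentiable (by norm_num)
  have hdu : ∀ i, Differentiable ℝ (deriv (u i)) := by
    intro i
    have h2 : ContDiff ℝ ((1 : ℕ) + 1) (u i) := by exact_mod_cast hu i
    exact (contDiff_succ_iff_deriv.mp h2).2.2.differentiable (by norm_num)
  have he' : ∀ i s, HasDerivAt (fun s => e i s) (t * deriv (u i) s * e i s) s := by
    intro i s
    have h1 : HasDerivAt (fun s => t * u i s) (t * deriv (u i) s) s :=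
      ((hu' i s).hasDerivAt).const_mul t
    have := h1.exp
    convert this using 1
    ring
  have hE' : ∀ s, HasDerivAt (fun s => ∑ i, e i s) (t * ∑ i, deriv (u i) s * e i s) s := by
    intro s
    have := HasDerivAt.fun_sum (fun i (_ : i ∈ Finset.univ) => he' i s)
    refine this.congr_deriv ?_
    rw [Finset.mul_sum]
    congr 1; funext i; ring
  have hφ' : ∀ s, HasDerivAt
      (fun s : ℝ => (1 / t) * Real.log ((1 / (N : ℝ)) * ∑ i, Real.exp (t * u i s)))
      ((∑ i, deriv (u i) s * e i s) / (∑ i, e i s)) s := by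
    intro s
    have hne : (1 / (N : ℝ)) * ∑ i, e i s ≠ 0 := by positivity
    have h1 := (((hE' s).const_mul (1 / (N : ℝ))).log hne).const_mul (1 / t)
    refine h1.congr_deriv ?_
    field_simp
  have hd1 : deriv (fun s : ℝ =>
      (1 / t) * Real.log ((1 / (N : ℝ)) * ∑ i, Real.exp (t * u i s)))
      = fun s => (∑ i, deriv (u i) s * e i s) / (∑ i, e i s) :=
    funext fun s => (hφ' s).deriv
  rw [hd1]
  -- second derivative
  set a : Fin N → ℝ := fun i => deriv (u i) 0 with ha
  set b : Fin N → ℝ := fun i => deriv (deriv (u i)) 0 with hb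
  set c : Fin N → ℝ := fun i => e i 0 with hc
  have hA : HasDerivAt (fun s => ∑ i, deriv (u i) s * e i s)
      (∑ i, (b i * c i + a i * (t * a i * c i))) 0 :=
    HasDerivAt.fun_sum (fun i _ => ((hdu i 0).hasDerivAt).fun_mul (he' i 0))
  have hdiv := hA.fun_div (hE' 0) (ne_of_gt (hEpos 0))
  rw [hdiv.deriv]
  have hE0 : (0:ℝ) < ∑ i, c i := hEpos 0
  rw [div_le_iff₀ (by positivity)]
  -- key inequalities
  have hS2 : ∑ i, b i * c i ≤ C * ∑ i, c i := by
    rw [Finset.mul_sum]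
    exact Finset.sum_le_sum fun i _ =>
      mul_le_mul_of_nonneg_right (hC i) (hepos i 0).le
  have hCS : (∑ i, a i * c i) ^ 2 ≤ (∑ i, a i ^ 2 * c i) * ∑ i, c i := by
    have h := Finset.sum_mul_sq_le_sq_mul_sq Finset.univ
      (fun i => a i * Real.sqrt (c i)) (fun i => Real.sqrt (c i))
    have h1 : ∀ i, a i * Real.sqrt (c i) * Real.sqrt (c i) = a i * c i := fun i => by
      rw [mul_assoc, Real.mul_self_sqrt (hepos i 0).le]
    have h2 : ∀ i, (a i * Real.sqrt (c i)) ^ 2 = a i ^ 2 * c i := fun i => by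
      rw [mul_pow, Real.sq_sqrt (hepos i 0).le]
    have h3 : ∀ i, Real.sqrt (c i) ^ 2 = c i := fun i => Real.sq_sqrt (hepos i 0).le
    simp only [h1, h2, h3] at h
    exact h
  have hsum : ∑ i, (b i * c i + a i * (t * a i * c i))
      = (∑ i, b i * c i) + t * ∑ i, a i ^ 2 * c i := by
    rw [Finset.mul_sum, ← Finset.sum_add_distrib]
    congr 1; funext i; ring
  rw [hsum]
  have hvar : t * ((∑ i, a i ^ 2 * c i) * (∑ i, c i) - (∑ i, a i * c i) ^ 2) ≤ 0 :=
    mul_nonpos_of_nonpos_of_nonneg ht.le (by linarith)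
  nlinarith [mul_le_mul_of_nonneg_right hS2 hE0.le, sq_nonneg (∑ i, c i)]

theorem tilted_hessian_bound_neg_t (N d : ℕ) (hN : 0 < N) (t βmax : ℝ) (ht : t < 0)
    (f : Fin N → EuclideanSpace ℝ (Fin d) → ℝ)
    (hf : ∀ i, ContDiff ℝ 2 (f i))
    (hH : ∀ i θ v, 0 ≤ iteratedFDeriv ℝ 2 (f i) θ ![v, v] ∧
        iteratedFDeriv ℝ 2 (f i) θ ![v, v] ≤ βmax * ‖v‖ ^ 2) :
    ∀ (θ v : EuclideanSpace ℝ (Fin d)),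
      iteratedFDeriv ℝ 2
          (fun θ => (1 / t) * Real.log ((1 / (N : ℝ)) * ∑ i, Real.exp (t * f i θ))) θ ![v, v]
        ≤ βmax * ‖v‖ ^ 2 := by
  intro θ v
  haveI : Nonempty (Fin N) := ⟨⟨0, hN⟩⟩
  have htne : t ≠ 0 := ne_of_lt ht
  have hinpos : ∀ x : EuclideanSpace ℝ (Fin d),
      0 < (1 / (N : ℝ)) * ∑ i, Real.exp (t * f i x) := by
    intro x
    have : 0 < ∑ i, Real.exp (t * f i x) :=
      Finset.sum_pos (fun i _ => Real.exp_pos _) Finset.univ_nonempty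
    positivity
  have hg : ContDiff ℝ 2
      (fun θ : EuclideanSpace ℝ (Fin d) =>
        (1 / t) * Real.log ((1 / (N : ℝ)) * ∑ i, Real.exp (t * f i θ))) := by
    refine contDiff_const.mul (ContDiff.log ?_ fun x => (hinpos x).ne')
    exact contDiff_const.mul (ContDiff.sum fun i _ => ((hf i).const_smul t).exp)
  have key := line_deriv2 _ hg θ v 0
  simp only [zero_smul, add_zero] at key
  rw [← key]
  refine core_1d N hN t (βmax * ‖v‖ ^ 2) ht (fun i s => f i (θ + s • v))
    (fun i => (hf i).comp (contDiff_const.add (contDiff_id.smul contDiff_const))) ?_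
  intro i
  have := line_deriv2 (f i) (hf i) θ v 0
  simp only [zero_smul, add_zero] at this
  rw [this]
  exact (hH i θ v).2
end
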